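/- (Theorem on robustness to contamination.) Fix α ∈ (0,1) and B(μ,V) = { x ∈ ℝ^p : d(x,μ,V) < ln(1/α) }. Let F be the probability measure on ℝ^p with elliptical density f(x) = det(V0)^{−1/2} ψ(d(x,μ0,V0)), let H be any probability measure on ℝ^p, and suppose F is centrally a*-separable from H, i.e., there is a* > 0 with H(B(μ0, aV0)) = 0 for all 0 < a ≤ a*. Let π ∈ [0,1) and let P = (1−π)F + πH be the Huber contamination mixture. Then for every 0 < a ≤ a*, taking (μ,V) = (μ0, aV0), the truncated estimating equations hold under P: ∫_{B(μ,V)} e^{−d(x,μ,V)} (x−μ) dP(x) = 0 and ∫_{B(μ,V)} e^{−d(x,μ,V)} ( (x−μ)(x−μ)ᵀ − (d(x,μ,V)/p)·V ) dP(x) = 0. -/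

import Mathlib

open MeasureTheory Matrix Finset

/-- Mahalanobis-type squared distance `d(x, μ, V) = (x−μ)ᵀ V⁻¹ (x−μ)`. -/
noncomputable def mahal {p : ℕ} (x μ : EuclideanSpace ℝ (Fin p))
    (V : Matrix (Fin p) (Fin p) ℝ) : ℝ :=
  ∑ i, ∑ j, (x i - μ i) * V⁻¹ i j * (x j - μ j)

/-- The central region `B(μ,V) = {x : d(x,μ,V) < ln(1/α)}`. -/
noncomputable def centralRegion {p : ℕ} (α : ℝ) (μ : EuclideanSpace ℝ (Fin p))
    (V : Matrix (Fin p) (Fin p) ℝ) : Set (EuclideanSpace ℝ (Fin p)) :=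
  {x | mahal x μ V < Real.log (1 / α)}


theorem odd_int {X : Type*} [MeasurableSpace X] {μ : Measure X}
    {G : Type*} [NormedAddCommGroup G] [NormedSpace ℝ G]
    (T : X ≃ᵐ X) (hT : MeasurePreserving T μ μ) (g : X → G)
    (hodd : ∀ x, g (T x) = - g x) : ∫ x, g x ∂μ = 0 := by
  have h := hT.integral_comp T.measurableEmbedding g
  have h2 : ∫ x, g (T x) ∂μ = ∫ x, -(g x) ∂μ :=
    integral_congr_ae (Filter.Eventually.of_forall fun x => hodd x)
  rw [h2, integral_neg] at h
  have h3 : (2 : ℝ) • ∫ x, g x ∂μ = 0 := by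
    rw [two_smul]
    nth_rewrite 1 [← h]
    exact neg_add_cancel _
  simpa using (smul_eq_zero.mp h3).resolve_left (by norm_num)

theorem eq_int {X : Type*} [MeasurableSpace X] {μ : Measure X}
    (T : X ≃ᵐ X) (hT : MeasurePreserving T μ μ) (g : X → ℝ) :
    ∫ x, g (T x) ∂μ = ∫ x, g x ∂μ :=
  hT.integral_comp T.measurableEmbedding g

noncomputable def flipE {p : ℕ} (k : Fin p) : (Fin p → ℝ) ≃ᵐ (Fin p → ℝ) :=
  MeasurableEquiv.piCongrRight (fun i =>
    if i = k then (Homeomorph.neg ℝ).toMeasurableEquiv else MeasurableEquiv.refl ℝ)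

theorem flipE_apply {p : ℕ} (k : Fin p) (z : Fin p → ℝ) (i : Fin p) :
    flipE k z i = if i = k then -z i else z i := by
  simp [flipE, MeasurableEquiv.piCongrRight]
  split <;> rfl

theorem flipE_mp {p : ℕ} (k : Fin p) : MeasurePreserving (flipE k) volume volume := by
  have : MeasurePreserving (fun (z : Fin p → ℝ) (i : Fin p) =>
      (fun x => if i = k then -x else x) (z i)) volume volume := by
    apply volume_preserving_pi (f := fun (i : Fin p) (x : ℝ) => if i = k then -x else x)
    intro i
    by_cases h : i = k
    · simpa [h] using Measure.measurePreserving_neg (volume : Measure ℝ)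
    · simp only [h, ↓reduceIte]
      exact MeasurePreserving.id _
  convert this using 1
  funext z; funext i
  rw [flipE_apply]

noncomputable def swapE {p : ℕ} (k l : Fin p) : (Fin p → ℝ) ≃ᵐ (Fin p → ℝ) :=
  MeasurableEquiv.piCongrLeft (fun _ => ℝ) (Equiv.swap k l)

theorem swapE_mp {p : ℕ} (k l : Fin p) : MeasurePreserving (swapE k l) volume volume :=
  volume_measurePreserving_piCongrLeft _ _

theorem swapE_apply {p : ℕ} (k l : Fin p) (z : Fin p → ℝ) (i : Fin p) :
    swapE k l z i = z (Equiv.swap k l i) := by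
  simp [swapE, MeasurableEquiv.coe_piCongrLeft, Equiv.piCongrLeft_apply_eq_cast]

noncomputable def Nsq {p : ℕ} (z : Fin p → ℝ) : ℝ := ∑ i, z i ^ 2

theorem Nsq_nonneg {p : ℕ} (z : Fin p → ℝ) : 0 ≤ Nsq z :=
  Finset.sum_nonneg fun i _ => sq_nonneg _

theorem sq_le_Nsq {p : ℕ} (z : Fin p → ℝ) (k : Fin p) : z k ^ 2 ≤ Nsq z :=
  Finset.single_le_sum (fun i _ => sq_nonneg (z i)) (mem_univ k)

theorem Nsq_flip {p : ℕ} (k : Fin p) (z : Fin p → ℝ) : Nsq (flipE k z) = Nsq z := by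
  unfold Nsq
  refine Finset.sum_congr rfl fun i _ => ?_
  rw [flipE_apply]; split <;> ring

theorem Nsq_swap {p : ℕ} (k l : Fin p) (z : Fin p → ℝ) : Nsq (swapE k l z) = Nsq z := by
  unfold Nsq
  simp_rw [swapE_apply]
  exact Fintype.sum_equiv (Equiv.swap k l) _ _ (fun i => rfl)

theorem Nsq_measurable {p : ℕ} : Measurable (Nsq (p := p)) := by
  apply Finset.measurable_sum
  intro i _
  exact ((measurable_pi_apply i).pow_const 2)

theorem J_offdiag {p : ℕ} (c : ℝ) (w : ℝ → ℝ) {k l : Fin p} (hkl : k ≠ l) :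
    ∫ z : Fin p → ℝ, Set.indicator {z | Nsq z < c}
      (fun z => w (Nsq z) * (z k * z l)) z = 0 := by
  refine odd_int (flipE k) (flipE_mp k) _ fun z => ?_
  have hm : flipE k z ∈ {z : Fin p → ℝ | Nsq z < c} ↔ z ∈ {z : Fin p → ℝ | Nsq z < c} := by
    simp [Nsq_flip]
  by_cases h : z ∈ {z : Fin p → ℝ | Nsq z < c}
  · rw [Set.indicator_of_mem (hm.mpr h), Set.indicator_of_mem h, Nsq_flip,
      flipE_apply, flipE_apply, if_pos rfl, if_neg hkl.symm]
    ring
  · rw [Set.indicator_of_notMem (fun hc => h (hm.mp hc)), Set.indicator_of_notMem h, neg_zero]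

theorem J_diag {p : ℕ} (c : ℝ) (w : ℝ → ℝ) (k l : Fin p) :
    ∫ z : Fin p → ℝ, Set.indicator {z | Nsq z < c}
      (fun z => w (Nsq z) * (z k * z k)) z
    = ∫ z : Fin p → ℝ, Set.indicator {z | Nsq z < c}
      (fun z => w (Nsq z) * (z l * z l)) z := by
  have := eq_int (swapE k l) (swapE_mp k l)
    (Set.indicator {z : Fin p → ℝ | Nsq z < c} (fun z => w (Nsq z) * (z l * z l)))
  rw [← this]
  refine integral_congr_ae (Filter.Eventually.of_forall fun z => ?_)
  dsimp only
  have hm : swapE k l z ∈ {z : Fin p → ℝ | Nsq z < c} ↔ z ∈ {z : Fin p → ℝ | Nsq z < c} := by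
    simp [Nsq_swap]
  by_cases h : z ∈ {z : Fin p → ℝ | Nsq z < c}
  · rw [Set.indicator_of_mem h, Set.indicator_of_mem (hm.mpr h), Nsq_swap, swapE_apply,
      Equiv.swap_apply_right]
  · rw [Set.indicator_of_notMem h, Set.indicator_of_notMem (fun hc => h (hm.mp hc))]

theorem abs_mul_le_of_sq {a b c : ℝ} (hc : 0 ≤ c) (ha : a ^ 2 ≤ c) (hb : b ^ 2 ≤ c) :
    |a * b| ≤ c := by
  rw [abs_mul]
  nlinarith [abs_nonneg a, abs_nonneg b, sq_abs a, sq_abs b]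

theorem pi_matrix {p : ℕ} (hp : 1 ≤ p) (c : ℝ) (hc : 0 ≤ c) (w : ℝ → ℝ) (hw : Measurable w)
    (hD : Integrable (Set.indicator {z : Fin p → ℝ | Nsq z < c} (fun z => w (Nsq z))))
    (S : Matrix (Fin p) (Fin p) ℝ) (i j : Fin p) :
    ∫ z : Fin p → ℝ, Set.indicator {z | Nsq z < c}
      (fun z => w (Nsq z) * ((S.mulVec z i) * (S.mulVec z j) - (Nsq z / p) * (S * Sᵀ) i j)) z
      = 0 := by
  have hpR : (p : ℝ) ≠ 0 := by positivity
  set U : Set (Fin p → ℝ) := {z | Nsq z < c} with hUdef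
  have hU : MeasurableSet U := Nsq_measurable measurableSet_Iio
  have hUb : ∀ z ∈ U, ∀ k l : Fin p, |z k * z l| ≤ c := by
    intro z hz k l
    exact abs_mul_le_of_sq hc (le_of_lt (lt_of_le_of_lt (sq_le_Nsq z k) hz))
      (le_of_lt (lt_of_le_of_lt (sq_le_Nsq z l) hz))
  have hbound : Integrable (fun z : Fin p → ℝ => c * ‖U.indicator (fun z => w (Nsq z)) z‖) :=
    hD.norm.const_mul c
  have hA : ∀ k l : Fin p, Integrable (U.indicator fun z => w (Nsq z) * (z k * z l)) := by
    intro k l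
    refine Integrable.mono hbound ?_ (Filter.Eventually.of_forall fun z => ?_)
    · exact (((hw.comp Nsq_measurable).mul
        ((measurable_pi_apply k).mul (measurable_pi_apply l))).indicator hU).aestronglyMeasurable
    · by_cases h : z ∈ U
      · rw [Set.indicator_of_mem h, Set.indicator_of_mem h]
        rw [norm_mul]
        calc ‖w (Nsq z)‖ * ‖z k * z l‖ ≤ ‖w (Nsq z)‖ * c :=
              mul_le_mul_of_nonneg_left (hUb z h k l) (norm_nonneg _)
          _ = c * ‖w (Nsq z)‖ := by ring
          _ ≤ ‖c * ‖w (Nsq z)‖‖ := le_abs_self _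
      · rw [Set.indicator_of_notMem h, Set.indicator_of_notMem h]
        simp
  have hN : Integrable (U.indicator fun z => w (Nsq z) * Nsq z) := by
    refine Integrable.mono hbound ?_ (Filter.Eventually.of_forall fun z => ?_)
    · exact (((hw.comp Nsq_measurable).mul Nsq_measurable).indicator hU).aestronglyMeasurable
    · by_cases h : z ∈ U
      · rw [Set.indicator_of_mem h, Set.indicator_of_mem h, norm_mul]
        have hle : ‖Nsq z‖ ≤ c := by
          rw [Real.norm_eq_abs, abs_of_nonneg (Nsq_nonneg z)]; exact le_of_lt h
        calc ‖w (Nsq z)‖ * ‖Nsq z‖ ≤ ‖w (Nsq z)‖ * c :=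
              mul_le_mul_of_nonneg_left hle (norm_nonneg _)
          _ = c * ‖w (Nsq z)‖ := by ring
          _ ≤ ‖c * ‖w (Nsq z)‖‖ := le_abs_self _
      · rw [Set.indicator_of_notMem h, Set.indicator_of_notMem h]
        simp
  set J : Fin p → Fin p → ℝ := fun k l => ∫ z : Fin p → ℝ,
    U.indicator (fun z => w (Nsq z) * (z k * z l)) z with hJdef
  set k0 : Fin p := ⟨0, hp⟩
  set κ : ℝ := J k0 k0 with hκdef
  have hJd : ∀ k : Fin p, J k k = κ := fun k => J_diag c w k k0
  have hJo : ∀ k l : Fin p, k ≠ l → J k l = 0 := fun k l hkl => J_offdiag c w hkl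
  have hsplit : (fun z : Fin p → ℝ => Set.indicator U
      (fun z => w (Nsq z) * ((S.mulVec z i) * (S.mulVec z j) - (Nsq z / p) * (S * Sᵀ) i j)) z)
      = fun z => (∑ k, ∑ l, S i k * S j l * (U.indicator (fun z => w (Nsq z) * (z k * z l)) z))
        - ((S * Sᵀ) i j / p) * (U.indicator (fun z => w (Nsq z) * Nsq z) z) := by
    funext z
    by_cases h : z ∈ U
    · simp only [Set.indicator_of_mem h]
      have hmv : ∀ m : Fin p, S.mulVec z m = ∑ k, S m k * z k := fun m => rfl
      have hsq : Nsq z = ∑ k, z k * z k :=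
        Finset.sum_congr rfl fun k _ => by ring
      rw [hmv, hmv, Finset.sum_mul_sum, mul_sub]
      congr 1
      · rw [Finset.mul_sum]
        refine Finset.sum_congr rfl fun k _ => ?_
        rw [Finset.mul_sum]
        refine Finset.sum_congr rfl fun l _ => ?_
        ring
      · ring
    · simp only [Set.indicator_of_notMem h, mul_zero]
      simp
  rw [hsplit]
  have hAint : Integrable (fun z : Fin p → ℝ =>
      ∑ k, ∑ l, S i k * S j l * (U.indicator (fun z => w (Nsq z) * (z k * z l)) z)) :=
    integrable_finset_sum _ fun k _ => integrable_finset_sum _ fun l _ =>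
      (hA k l).const_mul _
  have hBint : Integrable (fun z : Fin p → ℝ =>
      ((S * Sᵀ) i j / p) * (U.indicator (fun z => w (Nsq z) * Nsq z) z)) :=
    hN.const_mul _
  rw [integral_sub hAint hBint]
  rw [integral_finset_sum _ fun k _ => integrable_finset_sum _ fun l _ =>
      (hA k l).const_mul _]
  have h1 : ∀ k : Fin p, (∫ z : Fin p → ℝ,
      ∑ l, S i k * S j l * (U.indicator (fun z => w (Nsq z) * (z k * z l)) z)) =
        S i k * S j k * κ := by
    intro k
    rw [integral_finset_sum _ fun l _ => (hA k l).const_mul _]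
    rw [Finset.sum_eq_single k]
    · rw [integral_const_mul]
      have hJkk : (∫ a : Fin p → ℝ, U.indicator (fun z => w (Nsq z) * (z k * z k)) a) = J k k := rfl
      rw [hJkk, hJd k]
    · intro l _ hlk
      rw [integral_const_mul]
      have : (∫ z : Fin p → ℝ, U.indicator (fun z => w (Nsq z) * (z k * z l)) z) = J k l := rfl
      rw [this, hJo k l (Ne.symm hlk), mul_zero]
    · intro h; exact absurd (Finset.mem_univ k) h
  rw [Finset.sum_congr rfl fun k _ => h1 k]
  rw [integral_const_mul]
  have h2 : (∫ z : Fin p → ℝ, U.indicator (fun z => w (Nsq z) * Nsq z) z) = (p : ℝ) * κ := by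
    have hptw : (fun z : Fin p → ℝ => U.indicator (fun z => w (Nsq z) * Nsq z) z)
        = fun z => ∑ k, U.indicator (fun z => w (Nsq z) * (z k * z k)) z := by
      funext z
      by_cases h : z ∈ U
      · simp only [Set.indicator_of_mem h]
        have hsq : Nsq z = ∑ k, z k * z k :=
          Finset.sum_congr rfl fun k _ => by ring
        rw [hsq, Finset.mul_sum]
      · simp only [Set.indicator_of_notMem h]
        simp
    rw [hptw, integral_finset_sum _ fun k _ => hA k k]
    have : ∀ k : Fin p, (∫ z : Fin p → ℝ, U.indicator (fun z => w (Nsq z) * (z k * z k)) z) = κ :=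
      fun k => hJd k
    rw [Finset.sum_congr rfl fun k _ => this k]
    simp [mul_comm]
  rw [h2]
  have h3 : ∑ k, S i k * S j k * κ = (S * Sᵀ) i j * κ := by
    rw [Matrix.mul_apply, Finset.sum_mul]
    exact Finset.sum_congr rfl fun k _ => by rw [Matrix.transpose_apply]
  rw [h3]
  field_simp
  ring

theorem quad_eq_dot {p : ℕ} (M : Matrix (Fin p) (Fin p) ℝ) (y : Fin p → ℝ) :
    ∑ i, ∑ j, y i * M i j * y j = y ⬝ᵥ (M *ᵥ y) := by
  unfold dotProduct Matrix.mulVec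
  refine Finset.sum_congr rfl fun i _ => ?_
  unfold dotProduct
  rw [Finset.mul_sum]
  exact Finset.sum_congr rfl fun j _ => by ring

theorem key_quad {p : ℕ} (S V : Matrix (Fin p) (Fin p) ℝ) (hS : Sᵀ = S)
    (hid : S * V * S = 1) (z : Fin p → ℝ) :
    (S *ᵥ z) ⬝ᵥ (V *ᵥ (S *ᵥ z)) = Nsq z := by
  rw [Matrix.mulVec_mulVec, Matrix.dotProduct_mulVec]
  have hz : S *ᵥ z = z ᵥ* S := by rw [← hS, Matrix.mulVec_transpose, hS]
  have h1 : (S *ᵥ z) ᵥ* (V * S) = z ᵥ* (S * (V * S)) := by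
    rw [hz, Matrix.vecMul_vecMul]
  rw [h1, ← Matrix.mul_assoc, hid]
  simp [Matrix.vecMul_one, dotProduct, Nsq, sq]

noncomputable def reflE {p : ℕ} (c : EuclideanSpace ℝ (Fin p)) :
    EuclideanSpace ℝ (Fin p) ≃ᵐ EuclideanSpace ℝ (Fin p) :=
  (MeasurableEquiv.neg _).trans (MeasurableEquiv.addLeft c)

theorem reflE_apply {p : ℕ} (c x : EuclideanSpace ℝ (Fin p)) : reflE c x = c + (-x) := rfl

theorem reflE_mp {p : ℕ} (c : EuclideanSpace ℝ (Fin p)) :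
    MeasurePreserving (reflE c) volume volume :=
  (measurePreserving_add_left volume c).comp (Measure.measurePreserving_neg _)

-- nonnegativity of the quadratic form
theorem dot_nonneg {p : ℕ} {M : Matrix (Fin p) (Fin p) ℝ} (hM : M.PosSemidef)
    (y : Fin p → ℝ) : 0 ≤ ∑ i, ∑ j, y i * M i j * y j := by
  rw [quad_eq_dot]
  have := hM.re_dotProduct_nonneg (𝕜 := ℝ) y
  simpa using this
section MAIN

/-- robustness to contamination, Theorem 6.  Let `F` be the
elliptical distribution with density `f`, `H` any probability measure, and
suppose `F` is centrally `a*`-separable from `H`, i.e. `H(B(μ0, aV0)) = 0` for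
all `0 < a ≤ a*`.  Then under the Huber contamination mixture
`P = (1−π) F + π H` with `π ∈ [0,1)`, for every `0 < a ≤ a*` the pair
`(μ, V) = (μ0, a V0)` solves the truncated estimating equations under `P`
(the matrix equation being read entrywise). -/
theorem truncated_estimating_equations_under_contamination
    {p : ℕ} (hp : 1 ≤ p)
    (α : ℝ) (hα : α ∈ Set.Ioo (0 : ℝ) 1)
    (μ0 : EuclideanSpace ℝ (Fin p)) (V0 : Matrix (Fin p) (Fin p) ℝ)
    (hV0sym : V0.IsSymm) (hV0 : V0.PosDef)
    (ψ : ℝ → ℝ) (hψmeas : Measurable ψ) (hψpos : ∀ u, 0 ≤ u → 0 < ψ u)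
    (f : EuclideanSpace ℝ (Fin p) → ℝ)
    (hf : ∀ x, f x = (Real.sqrt V0.det)⁻¹ * ψ (mahal x μ0 V0))
    (hf1 : ∫ x, f x = 1)
    (F : Measure (EuclideanSpace ℝ (Fin p)))
    (hF : F = volume.withDensity fun x => ENNReal.ofReal (f x))
    (H : Measure (EuclideanSpace ℝ (Fin p))) (hH : IsProbabilityMeasure H)
    (astar : ℝ) (hastar : 0 < astar)
    (hsep : ∀ a : ℝ, 0 < a → a ≤ astar → H (centralRegion α μ0 (a • V0)) = 0)
    (π : ℝ) (hπ0 : 0 ≤ π) (hπ1 : π < 1)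
    (P : Measure (EuclideanSpace ℝ (Fin p)))
    (hP : P = ENNReal.ofReal (1 - π) • F + ENNReal.ofReal π • H) :
    ∀ a : ℝ, 0 < a → a ≤ astar →
      (∫ x in centralRegion α μ0 (a • V0),
          Real.exp (-(mahal x μ0 (a • V0))) • (x - μ0) ∂P = 0) ∧
      (∀ i j : Fin p,
        ∫ x in centralRegion α μ0 (a • V0),
          Real.exp (-(mahal x μ0 (a • V0))) *
            ((x i - μ0 i) * (x j - μ0 j) - (mahal x μ0 (a • V0) / p) * (a • V0) i j)
          ∂P = 0) := by
  intro a ha haa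
  classical
  obtain ⟨hα0, hα1⟩ := hα
  have hL : 0 < Real.log (1 / α) := Real.log_pos (one_lt_one_div hα0 hα1)
  set c : ℝ := a * Real.log (1 / α) with hcdef
  have hc : 0 < c := mul_pos ha hL
  have hpR : (p : ℝ) ≠ 0 := by positivity
  have hVdet : V0.det ≠ 0 := ne_of_gt hV0.det_pos
  have hainv : (a • V0)⁻¹ = a⁻¹ • V0⁻¹ := by
    apply Matrix.inv_eq_right_inv
    rw [Matrix.smul_mul, Matrix.mul_smul, smul_smul,
      Matrix.mul_nonsing_inv _ (isUnit_iff_ne_zero.mpr hVdet), mul_inv_cancel₀ (ne_of_gt ha)]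
    simp
  have hma : ∀ x, mahal x μ0 (a • V0) = a⁻¹ * mahal x μ0 V0 := by
    intro x
    simp only [mahal, hainv, Matrix.smul_apply, smul_eq_mul]
    rw [Finset.mul_sum]
    refine Finset.sum_congr rfl fun i _ => ?_
    rw [Finset.mul_sum]
    refine Finset.sum_congr rfl fun j _ => ?_
    ring
  set B : Set (EuclideanSpace ℝ (Fin p)) := centralRegion α μ0 (a • V0) with hBdef
  have hBeq : B = {x | mahal x μ0 V0 < c} := by
    ext x
    simp only [hBdef, centralRegion, Set.mem_setOf_eq, hma, hcdef]
    rw [inv_mul_lt_iff₀ ha]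
  have hqnn : ∀ x : EuclideanSpace ℝ (Fin p), 0 ≤ mahal x μ0 V0 := by
    intro x
    exact dot_nonneg hV0.inv.posSemidef _
  have hqmeas : Measurable (fun x : EuclideanSpace ℝ (Fin p) => mahal x μ0 V0) := by
    apply Finset.measurable_sum
    intro i _
    apply Finset.measurable_sum
    intro j _
    have hco : ∀ k : Fin p, Measurable (fun x : EuclideanSpace ℝ (Fin p) => x k) := fun k =>
      (measurable_pi_apply k).comp (WithLp.measurable_ofLp (p := 2) (X := Fin p → ℝ))
    exact (((hco i).sub measurable_const).mul measurable_const).mul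
      ((hco j).sub measurable_const)
  have hBmeas : MeasurableSet B := by rw [hBeq]; exact hqmeas measurableSet_Iio
  have hfmeas : Measurable f := by
    have : f = fun x => (Real.sqrt V0.det)⁻¹ * ψ (mahal x μ0 V0) := funext hf
    rw [this]
    exact measurable_const.mul (hψmeas.comp hqmeas)
  have hcst : (0:ℝ) ≤ (Real.sqrt V0.det)⁻¹ := inv_nonneg.mpr (Real.sqrt_nonneg _)
  have hfnn : ∀ x, 0 ≤ f x := fun x =>
    (hf x) ▸ mul_nonneg hcst (hψpos _ (hqnn x)).le
  have hfint : Integrable f := by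
    by_contra hcon
    rw [integral_undef hcon] at hf1
    exact one_ne_zero hf1.symm
  have hπ1' : (0:ℝ) < 1 - π := by linarith
  have hHB : H B = 0 := by rw [hBdef]; exact hsep a ha haa
  have hPB : P.restrict B = (ENNReal.ofReal (1 - π)) • (F.restrict B) := by
    rw [hP, Measure.restrict_add, Measure.restrict_smul, Measure.restrict_smul,
      Measure.restrict_eq_zero.mpr hHB, smul_zero, add_zero]
  have hFB : F.restrict B = (volume.restrict B).withDensity fun x => ENNReal.ofReal (f x) := by
    rw [hF, restrict_withDensity hBmeas]
  set w1 : ℝ → ℝ := fun u => (Real.sqrt V0.det)⁻¹ * ψ u * Real.exp (-(a⁻¹ * u)) with hw1def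
  have hw1meas : Measurable w1 :=
    (measurable_const.mul hψmeas).mul
      (Real.measurable_exp.comp ((measurable_id.const_mul a⁻¹).neg))
  have hw1nn : ∀ u, 0 ≤ u → 0 ≤ w1 u := fun u hu =>
    mul_nonneg (mul_nonneg hcst (hψpos u hu).le) (Real.exp_nonneg _)
  constructor
  · -- first estimating equation
    have hcore : ∫ x in B, w1 (mahal x μ0 V0) • (x - μ0) ∂volume = 0 := by
      rw [← integral_indicator hBmeas]
      set cv : EuclideanSpace ℝ (Fin p) := μ0 + μ0 with hcv
      refine odd_int (reflE cv) (reflE_mp cv) _ fun x => ?_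
      have hrx : ∀ i : Fin p, (reflE cv x) i - μ0 i = -(x i - μ0 i) := by
        intro i
        show (μ0 i + μ0 i) + -(x i) - μ0 i = -(x i - μ0 i)
        ring
      have hq' : mahal (reflE cv x) μ0 V0 = mahal x μ0 V0 := by
        simp only [mahal]
        refine Finset.sum_congr rfl fun i _ => Finset.sum_congr rfl fun j _ => ?_
        rw [hrx i, hrx j]; ring
      have hv : (reflE cv x) - μ0 = -(x - μ0) := by
        rw [reflE_apply, hcv]
        abel
      by_cases hx : x ∈ B
      · have hx' : reflE cv x ∈ B := by
          rw [hBeq] at hx ⊢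
          simpa [Set.mem_setOf_eq, hq'] using hx
        rw [Set.indicator_of_mem hx', Set.indicator_of_mem hx, hq', hv, smul_neg]
      · have hx' : reflE cv x ∉ B := by
          rw [hBeq] at hx ⊢
          simpa [Set.mem_setOf_eq, hq'] using hx
        rw [Set.indicator_of_notMem hx', Set.indicator_of_notMem hx, neg_zero]
    have hmeasNN : Measurable (fun x : EuclideanSpace ℝ (Fin p) => (f x).toNNReal) :=
      measurable_real_toNNReal.comp hfmeas
    rw [hPB, integral_smul_measure, hFB]
    rw [show (fun x => ENNReal.ofReal (f x)) = (fun x => ((f x).toNNReal : ENNReal)) from rfl]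
    rw [integral_withDensity_eq_integral_smul hmeasNN]
    have : ∫ x, (f x).toNNReal • (Real.exp (-(mahal x μ0 (a • V0))) • (x - μ0))
        ∂(volume.restrict B)
        = ∫ x in B, w1 (mahal x μ0 V0) • (x - μ0) ∂volume := by
      refine integral_congr_ae (Filter.Eventually.of_forall fun x => ?_)
      dsimp only
      rw [NNReal.smul_def, Real.coe_toNNReal _ (hfnn x), smul_smul, hma x, hf x]
    rw [this, hcore, smul_zero]
  · -- second estimating equation
    intro i j
    set S := (open scoped MatrixOrder in CFC.sqrt V0) with hSdef
    have hmulS : S * S = V0 := by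
      open scoped MatrixOrder in exact CFC.sqrt_mul_sqrt_self V0 hV0.posSemidef.nonneg
    have hsymS : Sᵀ = S := by
      have h : S.IsHermitian := by
        open scoped MatrixOrder in
        exact (Matrix.nonneg_iff_posSemidef.mp (CFC.sqrt_nonneg V0)).isHermitian
      exact (Matrix.conjTranspose_eq_transpose_of_trivial S).symm.trans h
    have hdetS : S.det ≠ 0 := by
      intro h
      have : V0.det = 0 := by rw [← hmulS, Matrix.det_mul, h, mul_zero]
      exact hVdet this
    have hone : S * V0⁻¹ * S = 1 := by
      have hinv : V0⁻¹ = S⁻¹ * S⁻¹ := by rw [← hmulS, Matrix.mul_inv_rev]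
      rw [hinv, ← Matrix.mul_assoc, Matrix.mul_assoc (S * S⁻¹),
        Matrix.mul_nonsing_inv _ (isUnit_iff_ne_zero.mpr hdetS),
        Matrix.nonsing_inv_mul _ (isUnit_iff_ne_zero.mpr hdetS)]
      simp
    have hVSS : V0 i j = (S * Sᵀ) i j := by rw [hsymS, hmulS]
    set e := (MeasurableEquiv.toLp 2 (Fin p → ℝ)).symm with hedef
    set μv : Fin p → ℝ := fun k => μ0 k with hμvdef
    set q' : (Fin p → ℝ) → ℝ :=
      fun z => ∑ k, ∑ l, (z k - μv k) * V0⁻¹ k l * (z l - μv l) with hq'def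
    have hq'meas : Measurable q' := by
      apply Finset.measurable_sum
      intro k _
      apply Finset.measurable_sum
      intro l _
      exact (((measurable_pi_apply k).sub measurable_const).mul measurable_const).mul
        ((measurable_pi_apply l).sub measurable_const)
    have hqe : ∀ z : Fin p → ℝ, mahal (e.symm z) μ0 V0 = q' z := fun z => rfl
    set τ : (Fin p → ℝ) → (Fin p → ℝ) := fun z => μv + S.mulVec z with hτdef
    have hτeq : τ = (fun y : Fin p → ℝ => μv + y) ∘ (Matrix.toLin' S) := by
      funext z
      simp [hτdef, Matrix.toLin'_apply]
    have hτmeas : Measurable τ := by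
      rw [hτeq]
      exact (measurable_const_add μv).comp
        (Matrix.toLin' S).continuous_of_finiteDimensional.measurable
    have hmap : Measure.map τ volume = ENNReal.ofReal |S.det⁻¹| • volume := by
      rw [hτeq, ← Measure.map_map (measurable_const_add μv)
          (Matrix.toLin' S).continuous_of_finiteDimensional.measurable,
        Real.map_matrix_volume_pi_eq_smul_volume_pi hdetS, Measure.map_smul,
        (measurePreserving_add_left volume μv).map_eq]
    have hqτ : ∀ z, q' (τ z) = Nsq z := by
      intro z
      have h0 : ∀ k, τ z k - μv k = S.mulVec z k := by
        intro k
        show μv k + S.mulVec z k - μv k = _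
        ring
      have hq1 : q' (τ z) = ∑ k, ∑ l, (S.mulVec z) k * V0⁻¹ k l * (S.mulVec z) l := by
        simp only [hq'def]
        exact Finset.sum_congr rfl fun k _ => Finset.sum_congr rfl fun l _ => by rw [h0 k, h0 l]
      rw [hq1, quad_eq_dot, key_quad S V0⁻¹ hsymS hone z]
    have hmeasNN : Measurable (fun x : EuclideanSpace ℝ (Fin p) => (f x).toNNReal) :=
      measurable_real_toNNReal.comp hfmeas
    rw [hPB, integral_smul_measure, hFB]
    rw [show (fun x => ENNReal.ofReal (f x)) = (fun x => ((f x).toNNReal : ENNReal)) from rfl]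
    rw [integral_withDensity_eq_integral_smul hmeasNN]
    have hptw : ∫ x, (f x).toNNReal • (Real.exp (-(mahal x μ0 (a • V0))) *
          ((x i - μ0 i) * (x j - μ0 j) - mahal x μ0 (a • V0) / p * (a • V0) i j))
          ∂(volume.restrict B)
        = ∫ x in B, w1 (mahal x μ0 V0) *
            ((x i - μ0 i) * (x j - μ0 j) - mahal x μ0 V0 / p * V0 i j) ∂volume := by
      refine integral_congr_ae (Filter.Eventually.of_forall fun x => ?_)
      dsimp only
      rw [NNReal.smul_def, Real.coe_toNNReal _ (hfnn x), smul_eq_mul, hma x, hf x]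
      have hsm : (a • V0) i j = a * V0 i j := rfl
      have haq : a⁻¹ * mahal x μ0 V0 / (p:ℝ) * (a * V0 i j)
          = mahal x μ0 V0 / (p:ℝ) * V0 i j := by
        have h' : a⁻¹ * mahal x μ0 V0 / (p:ℝ) * (a * V0 i j)
            = (a⁻¹ * a) * (mahal x μ0 V0 / (p:ℝ) * V0 i j) := by ring
        rw [h', inv_mul_cancel₀ (ne_of_gt ha), one_mul]
      rw [hsm, haq]
      simp only [hw1def]
      ring
    rw [hptw]
    have hcore : ∫ x in B, w1 (mahal x μ0 V0) *
        ((x i - μ0 i) * (x j - μ0 j) - mahal x μ0 V0 / p * V0 i j) ∂volume = 0 := by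
      rw [← integral_indicator hBmeas]
      have htrans : ∫ x, Set.indicator B (fun x => w1 (mahal x μ0 V0) *
            ((x i - μ0 i) * (x j - μ0 j) - mahal x μ0 V0 / p * V0 i j)) x
          = ∫ z : Fin p → ℝ, Set.indicator B (fun x => w1 (mahal x μ0 V0) *
            ((x i - μ0 i) * (x j - μ0 j) - mahal x μ0 V0 / p * V0 i j)) (e.symm z) :=
        ((MeasurePreserving.symm _
            (EuclideanSpace.volume_preserving_symm_measurableEquiv_toLp (Fin p))).integral_comp
          e.symm.measurableEmbedding _).symm
      rw [htrans]
      set Gp : (Fin p → ℝ) → ℝ := fun z => Set.indicator {z : Fin p → ℝ | q' z < c}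
          (fun z => w1 (q' z) * ((z i - μv i) * (z j - μv j) - q' z / p * V0 i j)) z with hGpdef
      have hGe : (fun z : Fin p → ℝ => Set.indicator B (fun x => w1 (mahal x μ0 V0) *
            ((x i - μ0 i) * (x j - μ0 j) - mahal x μ0 V0 / p * V0 i j)) (e.symm z)) = Gp := by
        funext z
        rw [hGpdef]
        dsimp only
        by_cases hz : z ∈ {z : Fin p → ℝ | q' z < c}
        · have hmem : e.symm z ∈ B := by
            rw [hBeq]
            exact hz
          rw [Set.indicator_of_mem hmem, Set.indicator_of_mem hz]
          rfl
        · have hmem : e.symm z ∉ B := by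
            rw [hBeq]
            exact hz
          rw [Set.indicator_of_notMem hmem, Set.indicator_of_notMem hz]
      rw [hGe]
      have hGpmeas : Measurable Gp := by
        rw [hGpdef]
        exact ((hw1meas.comp hq'meas).mul
          ((((measurable_pi_apply i).sub measurable_const).mul
            ((measurable_pi_apply j).sub measurable_const)).sub
            ((hq'meas.div_const _).mul_const _))).indicator (hq'meas measurableSet_Iio)
      have hmape : Measure.map (⇑e.symm) volume = volume :=
        (MeasurePreserving.symm _
          (EuclideanSpace.volume_preserving_symm_measurableEquiv_toLp (Fin p))).map_eq
      have hF0 : Integrable (f ∘ ⇑e.symm) volume := by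
        refine (integrable_map_measure hfmeas.aestronglyMeasurable
          e.symm.measurable.aemeasurable).mp ?_
        rw [hmape]
        exact hfint
      have hF0τ : Integrable ((f ∘ ⇑e.symm) ∘ τ) volume := by
        refine (integrable_map_measure (hfmeas.comp e.symm.measurable).aestronglyMeasurable
          hτmeas.aemeasurable).mp ?_
        rw [hmap]
        exact hF0.smul_measure ENNReal.ofReal_ne_top
      have hfval : ∀ z, (f ∘ ⇑e.symm) (τ z) = (Real.sqrt V0.det)⁻¹ * ψ (Nsq z) := by
        intro z
        show f (e.symm (τ z)) = _
        rw [hf (e.symm (τ z)), hqe (τ z), hqτ z]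
      have hD : Integrable (Set.indicator {z : Fin p → ℝ | Nsq z < c} (fun z => w1 (Nsq z))) := by
        refine hF0τ.mono ((hw1meas.comp Nsq_measurable).indicator
          (Nsq_measurable measurableSet_Iio)).aestronglyMeasurable
          (Filter.Eventually.of_forall fun z => ?_)
        by_cases hz : z ∈ {z : Fin p → ℝ | Nsq z < c}
        · rw [Set.indicator_of_mem hz]
          have hN : 0 ≤ Nsq z := Nsq_nonneg z
          rw [Real.norm_of_nonneg (hw1nn _ hN)]
          have hexp : Real.exp (-(a⁻¹ * Nsq z)) ≤ 1 :=
            Real.exp_le_one_iff.mpr (neg_nonpos.mpr (mul_nonneg (inv_nonneg.mpr ha.le) hN))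
          have h2 : w1 (Nsq z) ≤ (Real.sqrt V0.det)⁻¹ * ψ (Nsq z) := by
            rw [hw1def]
            exact mul_le_of_le_one_right (mul_nonneg hcst (hψpos _ hN).le) hexp
          calc w1 (Nsq z) ≤ (Real.sqrt V0.det)⁻¹ * ψ (Nsq z) := h2
            _ = (f ∘ ⇑e.symm) (τ z) := (hfval z).symm
            _ ≤ ‖(f ∘ ⇑e.symm) (τ z)‖ := le_abs_self _
        · rw [Set.indicator_of_notMem hz, norm_zero]
          exact norm_nonneg _
      have h1 : ∫ z, Gp z ∂(Measure.map τ volume) = ∫ z, Gp (τ z) ∂volume :=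
        integral_map hτmeas.aemeasurable hGpmeas.aestronglyMeasurable
      rw [hmap, integral_smul_measure] at h1
      have hGτeq : (fun z => Gp (τ z)) = fun z => Set.indicator {z : Fin p → ℝ | Nsq z < c}
          (fun z => w1 (Nsq z) * ((S.mulVec z i) * (S.mulVec z j)
            - (Nsq z / p) * (S * Sᵀ) i j)) z := by
        funext z
        rw [hGpdef]
        dsimp only
        have hzm : τ z ∈ {z : Fin p → ℝ | q' z < c} ↔ z ∈ {z : Fin p → ℝ | Nsq z < c} := by
          simp only [Set.mem_setOf_eq, hqτ z]
        by_cases hz : z ∈ {z : Fin p → ℝ | Nsq z < c}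
        · rw [Set.indicator_of_mem (hzm.mpr hz), Set.indicator_of_mem hz]
          have h0 : ∀ k, τ z k - μv k = S.mulVec z k := by
            intro k
            show μv k + S.mulVec z k - μv k = _
            ring
          rw [hqτ z, h0 i, h0 j, ← hVSS]
        · rw [Set.indicator_of_notMem (fun hc' => hz (hzm.mp hc')), Set.indicator_of_notMem hz]
      have h2 : ∫ z, Gp (τ z) ∂volume = 0 := by
        rw [hGτeq]
        exact pi_matrix hp c hc.le w1 hw1meas hD S i j
      rw [h2] at h1
      have hr : (ENNReal.ofReal |S.det⁻¹|).toReal ≠ 0 := by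
        rw [ENNReal.toReal_ofReal (abs_nonneg _)]
        exact abs_ne_zero.mpr (inv_ne_zero hdetS)
      exact (smul_eq_zero.mp h1).resolve_left hr
    rw [hcore, smul_zero]

end MAIN
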